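/- Let α, β ∈ (1,2) with α ≠ β, let d, e, ρ > 0, and set γ = min{α, β}. Then there exist real constants C₁, C₂ > 0 such that C₁ < limsup_{(θ₁,θ₂)→(0,0)} 𝓕_{(α,β)}(θ₁,θ₂)/((θ₁²+θ₂²)^{γ/2}) < C₂. Explicitly, if γ = α the limsup is at most -2d cos(απ/2) (a number in (0, 2d)), and if γ = β the limsup is at most -2eρ cos(βπ/2) (a number in (0, 2eρ)). -/

import Mathlib

open scoped Real Topology
open Filter

/-- Alternating fractional binomial coefficients. -/
noncomputable def gcoef (γ : ℝ) (k : ℕ) : ℝ :=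
  (-1 : ℝ) ^ k / (Nat.factorial k) * ∏ i ∈ Finset.range k, (γ - i)

lemma gcoef_zero (γ : ℝ) : gcoef γ 0 = 1 := by simp [gcoef]

lemma gcoef_succ (γ : ℝ) (k : ℕ) :
    gcoef γ (k + 1) = gcoef γ k * (((k : ℝ) - γ) / (k + 1)) := by
  have hk : (k : ℝ) + 1 ≠ 0 := by positivity
  have hf : (Nat.factorial k : ℝ) ≠ 0 := by positivity
  simp only [gcoef, Finset.prod_range_succ, Nat.factorial_succ, pow_succ]
  push_cast
  field_simp
  ring

lemma gcoef_shift (γ : ℝ) (n : ℕ) :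
    gcoef γ (n + 1) = -γ / (n + 1) * gcoef (γ - 1) n := by
  have hprod : ∏ i ∈ Finset.range (n + 1), (γ - i) = γ * ∏ i ∈ Finset.range n, (γ - 1 - i) := by
    rw [Finset.prod_range_succ']
    simp only [Nat.cast_zero, sub_zero]
    rw [mul_comm]
    congr 1
    apply Finset.prod_congr rfl
    intro i _
    push_cast
    ring
  have hf : (Nat.factorial n : ℝ) ≠ 0 := by positivity
  have hk : (n : ℝ) + 1 ≠ 0 := by positivity
  simp only [gcoef, hprod, Nat.factorial_succ, pow_succ]
  push_cast
  field_simp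

lemma sum_gcoef (γ : ℝ) (n : ℕ) :
    ∑ k ∈ Finset.range (n + 1), gcoef γ k = gcoef (γ - 1) n := by
  induction n with
  | zero => simp [gcoef]
  | succ n ih =>
      rw [Finset.sum_range_succ, ih, gcoef_shift, gcoef_succ]
      have hk : (n : ℝ) + 1 ≠ 0 := by positivity
      field_simp
      ring

lemma abs_gcoef_le {μ : ℝ} (hμ0 : 0 < μ) (hμ1 : μ < 1) :
    ∀ n : ℕ, 1 ≤ n → |gcoef μ n| ≤ μ / n := by
  intro n hn
  induction n with
  | zero => omega
  | succ n ih =>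
      rcases Nat.eq_or_lt_of_le hn with h | h
      · have : n = 0 := by omega
        subst this
        rw [gcoef_succ, gcoef_zero]
        rw [one_mul, abs_div]
        rw [abs_of_nonpos (by norm_num; linarith : ((0:ℕ):ℝ) - μ ≤ 0)]
        norm_num
      · have hn1 : 1 ≤ n := by omega
        have ihn := ih hn1
        rw [gcoef_succ, abs_mul]
        have h1 : |((n : ℝ) - μ) / (n + 1)| = ((n : ℝ) - μ) / (n + 1) := by
          rw [abs_of_nonneg]
          apply div_nonneg _ (by positivity)
          have : (1:ℝ) ≤ n := by exact_mod_cast hn1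
          linarith
        rw [h1]
        have hnpos : (0:ℝ) < n := by exact_mod_cast hn1
        calc |gcoef μ n| * (((n : ℝ) - μ) / (n + 1)) ≤ (μ / n) * (((n : ℝ) - μ) / (n + 1)) := by
              apply mul_le_mul_of_nonneg_right ihn
              apply div_nonneg _ (by positivity)
              have : (1:ℝ) ≤ n := by exact_mod_cast hn1
              linarith
          _ ≤ μ / (n + 1) := by
              rw [div_mul_div_comm, div_le_div_iff₀ (by positivity) (by positivity)]
              have : μ * ((n:ℝ) - μ) ≤ μ * n := by nlinarith
              nlinarith
        push_cast
        linarith [le_refl (μ / ((n:ℝ)+1))]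

lemma tendsto_gcoef_zero {μ : ℝ} (hμ0 : 0 < μ) (hμ1 : μ < 1) :
    Tendsto (fun n : ℕ => gcoef μ n) atTop (𝓝 0) := by
  apply squeeze_zero_norm' _ (by simpa using tendsto_const_div_atTop_nhds_zero_nat μ)
  filter_upwards [eventually_ge_atTop 1] with n hn
  simpa using abs_gcoef_le hμ0 hμ1 n hn

lemma abs_gcoef_add_two_le {γ : ℝ} (hγ1 : 1 < γ) (hγ2 : γ < 2) (n : ℕ) :
    |gcoef γ (n + 2)| ≤ 2 / ((n:ℝ) + 1) ^ 2 := by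
  have h1 : |gcoef γ (n + 2)| = γ / (n + 2) * |gcoef (γ - 1) (n + 1)| := by
    rw [gcoef_shift, abs_mul, abs_div]
    rw [abs_of_nonpos (by linarith : -γ ≤ 0)]
    push_cast
    rw [abs_of_pos (by positivity : (0:ℝ) < (n:ℝ) + 1 + 1)]
    ring_nf
  have h2 := abs_gcoef_le (by linarith : (0:ℝ) < γ - 1) (by linarith) (n + 1) (by omega)
  rw [h1]
  have hn2 : (0:ℝ) < (n:ℝ) + 2 := by positivity
  have hn1 : (0:ℝ) < (n:ℝ) + 1 := by positivity
  calc γ / ((n:ℝ) + 2) * |gcoef (γ - 1) (n + 1)| ≤ γ / ((n:ℝ) + 2) * ((γ-1) / (n + 1)) := by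
        apply mul_le_mul_of_nonneg_left _ (by positivity)
        calc |gcoef (γ-1) (n+1)| ≤ (γ-1)/((n:ℕ)+1 : ℕ) := h2
          _ = (γ-1)/((n:ℝ)+1) := by push_cast; ring_nf
    _ ≤ 2 / ((n:ℝ) + 1) ^ 2 := by
        rw [div_mul_div_comm, div_le_div_iff₀ (by positivity) (by positivity)]
        nlinarith [mul_pos (by linarith : (0:ℝ) < 2 - γ) (by linarith : (0:ℝ) < γ - 1), sq_nonneg ((n:ℝ)+1), hn1.le, mul_le_mul_of_nonneg_left (by linarith : (n:ℝ)+1 ≤ (n:ℝ)+2) (le_of_lt hn1)]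

lemma summable_abs_gcoef {γ : ℝ} (hγ1 : 1 < γ) (hγ2 : γ < 2) :
    Summable (fun n : ℕ => |gcoef γ n|) := by
  rw [← summable_nat_add_iff 2]
  apply Summable.of_nonneg_of_le (fun n => abs_nonneg _) (abs_gcoef_add_two_le hγ1 hγ2)
  apply Summable.mul_left
  have h1 : Summable (fun n : ℕ => 1 / ((n:ℝ)) ^ 2) := by
    simpa using Real.summable_one_div_nat_pow.2 (by norm_num : 1 < 2)
  have := (summable_nat_add_iff (f := fun n : ℕ => 1 / ((n:ℝ)) ^ 2) 1).2 h1
  simpa using this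

/-- WSGD weights. -/
noncomputable def w (γ : ℝ) : ℕ → ℝ
  | 0 => γ / 2 * gcoef γ 0
  | (k + 1) => γ / 2 * gcoef γ (k + 1) + (2 - γ) / 2 * gcoef γ k

/-- The symbol `f_γ(ξ) = -∑_{k=-1}^∞ w_{k+1}^{(γ)} e^{ikξ}`. -/
noncomputable def fsym (γ : ℝ) (ξ : ℝ) : ℂ :=
  -∑' k : ℕ, (w γ k : ℂ) * Complex.exp (Complex.I * ((k : ℂ) - 1) * (ξ : ℂ))

/-- `q_γ(ξ) = f_γ(ξ) + f_γ(-ξ)` (real-valued). -/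
noncomputable def qsym (γ : ℝ) (ξ : ℝ) : ℂ := fsym γ ξ + fsym γ (-ξ)

/-- `𝓕_{(α,β)}(θ₁,θ₂) = d·q_α(θ₁) + e·ρ·q_β(θ₂)`. -/
noncomputable def Fsym (α β d e ρ : ℝ) (θ : ℝ × ℝ) : ℝ :=
  d * (qsym α θ.1).re + e * ρ * (qsym β θ.2).re

lemma abs_gcoef_le_two {γ : ℝ} (hγ1 : 1 < γ) (hγ2 : γ < 2) (n : ℕ) :
    |gcoef γ n| ≤ 2 := by
  match n with
  | 0 => rw [gcoef_zero]; norm_num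
  | 1 =>
      have := gcoef_succ γ 0
      rw [gcoef_zero] at this
      rw [this]
      simp only [Nat.cast_zero, zero_sub, one_mul]
      rw [abs_div, abs_of_nonpos (by linarith), abs_of_pos (by norm_num : (0:ℝ) < 0+1)]
      norm_num; linarith
  | (n + 2) =>
      calc |gcoef γ (n+2)| ≤ 2 / ((n:ℝ)+1)^2 := abs_gcoef_add_two_le hγ1 hγ2 n
        _ ≤ 2 / 1 := by
            apply div_le_div_of_nonneg_left (by norm_num) (by norm_num)
            nlinarith [Nat.cast_nonneg (α := ℝ) n]
        _ = 2 := by norm_num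

noncomputable def Sg (γ : ℝ) (z : ℂ) : ℂ := ∑' k : ℕ, (gcoef γ k : ℂ) * z ^ k

lemma summable_Sg {γ : ℝ} (hγ1 : 1 < γ) (hγ2 : γ < 2) {z : ℂ} (hz : ‖z‖ ≤ 1) :
    Summable (fun k : ℕ => (gcoef γ k : ℂ) * z ^ k) := by
  apply Summable.of_norm
  apply Summable.of_nonneg_of_le (fun k => norm_nonneg _) _ (summable_abs_gcoef hγ1 hγ2)
  intro k
  rw [norm_mul, norm_pow]
  calc ‖(gcoef γ k : ℂ)‖ * ‖z‖ ^ k ≤ ‖(gcoef γ k : ℂ)‖ * 1 := by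
        apply mul_le_mul_of_nonneg_left _ (norm_nonneg _)
        exact pow_le_one₀ (norm_nonneg _) hz
    _ = |gcoef γ k| := by rw [mul_one, Complex.norm_real]; rfl

lemma Sg_zero (γ : ℝ) : Sg γ 0 = 1 := by
  rw [Sg, tsum_eq_single 0]
  · simp [gcoef_zero]
  · intro k hk
    cases k with
    | zero => exact absurd rfl hk
    | succ n => simp

noncomputable def Dg (γ : ℝ) (z : ℂ) : ℂ := ∑' k : ℕ, (gcoef γ (k+1) : ℂ) * (k+1) * z ^ k

lemma summable_kpow {r : ℝ} (hr0 : 0 ≤ r) (hr : r < 1) :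
    Summable (fun k : ℕ => 2 * ((k:ℝ)+1) * r ^ k) := by
  have h1 : Summable (fun k : ℕ => (k:ℝ) ^ 1 * r ^ k) :=
    summable_pow_mul_geometric_of_norm_lt_one 1 (by rwa [Real.norm_eq_abs, abs_of_nonneg hr0])
  have h2 : Summable (fun k : ℕ => r ^ k) := summable_geometric_of_lt_one hr0 hr
  have := (h1.add h2).mul_left 2
  apply this.congr
  intro k; push_cast; ring

lemma summable_Dg {γ : ℝ} (hγ1 : 1 < γ) (hγ2 : γ < 2) {z : ℂ} (hz : ‖z‖ < 1) :
    Summable (fun k : ℕ => (gcoef γ (k+1) : ℂ) * (k+1) * z ^ k) := by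
  apply Summable.of_norm
  apply Summable.of_nonneg_of_le (fun k => norm_nonneg _) _ (summable_kpow (norm_nonneg z) hz)
  intro k
  rw [norm_mul, norm_mul, norm_pow]
  have h1 : ‖(gcoef γ (k+1) : ℂ)‖ ≤ 2 := by
    rw [Complex.norm_real]; exact abs_gcoef_le_two hγ1 hγ2 (k+1)
  have h2 : ‖((k:ℂ)+1)‖ = (k:ℝ)+1 := by
    norm_cast
  rw [h2]
  have : (0:ℝ) ≤ ((k:ℝ)+1) * ‖z‖^k := by positivity
  nlinarith [norm_nonneg (gcoef γ (k+1) : ℂ), pow_nonneg (norm_nonneg z) k, Nat.cast_nonneg (α := ℝ) k]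

lemma summable_kpow' {r : ℝ} (hr0 : 0 ≤ r) (hr : r < 1) :
    Summable (fun k : ℕ => 2 * ((k:ℝ)+1) * r ^ (k - 1)) := by
  rw [← summable_nat_add_iff 1]
  have h := (summable_kpow hr0 hr).add ((summable_geometric_of_lt_one hr0 hr).mul_left 2)
  apply h.congr
  intro k
  simp only [Nat.add_sub_cancel]
  push_cast; ring

lemma norm_gd_le {γ : ℝ} (hγ1 : 1 < γ) (hγ2 : γ < 2) {r : ℝ} (k : ℕ) {y : ℂ}
    (hy : ‖y‖ ≤ r) : ‖(gcoef γ k : ℂ) * ((k:ℂ) * y ^ (k-1))‖ ≤ 2 * ((k:ℝ)+1) * r ^ (k-1) := by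
  have hr0 : 0 ≤ r := le_trans (norm_nonneg y) hy
  rw [norm_mul, norm_mul, norm_pow]
  have h1 : ‖(gcoef γ k : ℂ)‖ ≤ 2 := by rw [Complex.norm_real]; exact abs_gcoef_le_two hγ1 hγ2 k
  have h2 : ‖(k:ℂ)‖ = (k:ℝ) := Complex.norm_natCast k
  rw [h2]
  have h3 : ‖y‖ ^ (k-1) ≤ r ^ (k-1) := pow_le_pow_left₀ (norm_nonneg y) hy _
  have h4 : (k:ℝ) * ‖y‖^(k-1) ≤ ((k:ℝ)+1) * r^(k-1) :=
    mul_le_mul (by linarith) h3 (by positivity) (by positivity)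
  calc ‖(gcoef γ k : ℂ)‖ * ((k:ℝ) * ‖y‖ ^ (k-1)) ≤ 2 * ((k:ℝ) * ‖y‖^(k-1)) := by
        apply mul_le_mul_of_nonneg_right h1 (by positivity)
    _ ≤ 2 * (((k:ℝ)+1) * r^(k-1)) := by nlinarith
    _ = 2 * ((k:ℝ)+1) * r ^ (k-1) := by ring

lemma hasDerivAt_Sg {γ : ℝ} (hγ1 : 1 < γ) (hγ2 : γ < 2) {z : ℂ} (hz : ‖z‖ < 1) :
    HasDerivAt (Sg γ) (Dg γ z) z := by
  obtain ⟨r, hzr, hr1⟩ := exists_between hz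
  have hr0 : 0 ≤ r := le_trans (norm_nonneg z) hzr.le
  have hzball : z ∈ Metric.ball (0:ℂ) r := by simpa [Metric.mem_ball, dist_eq_norm] using hzr
  have key : HasDerivAt (fun w => ∑' k : ℕ, (gcoef γ k : ℂ) * w ^ k)
      (∑' k : ℕ, (gcoef γ k : ℂ) * ((k:ℂ) * z ^ (k-1))) z := by
    apply hasDerivAt_tsum_of_isPreconnected
      (summable_kpow' hr0 hr1) (Metric.isOpen_ball (x := (0:ℂ)) (ε := r))
      ((convex_ball (0:ℂ) r).isPreconnected)
      (g' := fun k y => (gcoef γ k : ℂ) * ((k:ℂ) * y ^ (k-1)))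
      (fun n y _ => (hasDerivAt_pow n y).const_mul _)
      _ hzball (summable_Sg hγ1 hγ2 hz.le) hzball
    intro k y hy
    rw [mem_ball_zero_iff] at hy
    exact norm_gd_le hγ1 hγ2 k hy.le
  have hsum : Summable (fun k : ℕ => (gcoef γ k : ℂ) * ((k:ℂ) * z ^ (k-1))) := by
    apply Summable.of_norm
    apply Summable.of_nonneg_of_le (fun k => norm_nonneg _) _ (summable_kpow' hr0 hr1)
    exact fun k => norm_gd_le hγ1 hγ2 k hzr.le
  have heq : (∑' k : ℕ, (gcoef γ k : ℂ) * ((k:ℂ) * z ^ (k-1))) = Dg γ z := by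
    rw [Summable.tsum_eq_zero_add hsum]
    simp only [Nat.cast_zero, zero_mul, mul_zero, zero_add]
    rw [Dg]
    apply tsum_congr
    intro k
    simp only [Nat.add_sub_cancel]
    push_cast
    ring
  rw [← heq]
  exact key

lemma gcoef_one (γ : ℝ) : gcoef γ 1 = -γ := by
  have := gcoef_succ γ 0
  rw [gcoef_zero] at this
  rw [this]; norm_num

lemma ode_Sg {γ : ℝ} (hγ1 : 1 < γ) (hγ2 : γ < 2) {z : ℂ} (hz : ‖z‖ < 1) :
    (γ:ℂ) * Sg γ z + (1 - z) * Dg γ z = 0 := by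
  have HS : HasSum (fun k : ℕ => (gcoef γ k : ℂ) * z ^ k) (Sg γ z) :=
    (summable_Sg hγ1 hγ2 hz.le).hasSum
  have HD : HasSum (fun k : ℕ => (gcoef γ (k+1) : ℂ) * ((k:ℂ)+1) * z ^ k) (Dg γ z) :=
    (summable_Dg hγ1 hγ2 hz).hasSum
  have HSshift : HasSum (fun k : ℕ => (gcoef γ (k+1) : ℂ) * z ^ (k+1)) (Sg γ z - 1) := by
    rw [hasSum_nat_add_iff (f := fun k : ℕ => (gcoef γ k : ℂ) * z ^ k) 1]
    simpa [gcoef_zero] using HS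
  have HDshift : HasSum (fun k : ℕ => (gcoef γ (k+2) : ℂ) * ((k:ℂ)+2) * z ^ (k+1))
      (Dg γ z - (gcoef γ 1 : ℂ)) := by
    rw [show (fun k : ℕ => (gcoef γ (k+2) : ℂ) * ((k:ℂ)+2) * z ^ (k+1))
        = (fun k : ℕ => (gcoef γ ((k+1)+1) : ℂ) * (((k+1 : ℕ):ℂ)+1) * z ^ (k+1)) from by
      funext k; push_cast; ring_nf]
    rw [hasSum_nat_add_iff (f := fun k : ℕ => (gcoef γ (k+1) : ℂ) * ((k:ℂ)+1) * z ^ k) 1]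
    simpa using HD
  have H3 : HasSum (fun k : ℕ => (gcoef γ (k+1) : ℂ) * ((k:ℂ)+1) * z ^ (k+1))
      (z * Dg γ z) := by
    have := HD.mul_left z
    rw [show (fun k : ℕ => z * ((gcoef γ (k+1) : ℂ) * ((k:ℂ)+1) * z ^ k))
        = (fun k : ℕ => (gcoef γ (k+1) : ℂ) * ((k:ℂ)+1) * z ^ (k+1)) from by
      funext k; ring] at this
    exact this
  have Hcomb := ((HSshift.mul_left (γ:ℂ)).add HDshift).sub H3
  have hzero : (fun k : ℕ => (γ:ℂ) * ((gcoef γ (k+1) : ℂ) * z ^ (k+1))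
      + (gcoef γ (k+2) : ℂ) * ((k:ℂ)+2) * z ^ (k+1)
      - (gcoef γ (k+1) : ℂ) * ((k:ℂ)+1) * z ^ (k+1)) = fun _ => 0 := by
    funext k
    have hrec : ((k:ℝ)+2) * gcoef γ (k+2) = gcoef γ (k+1) * (((k:ℝ)+1) - γ) := by
      have := gcoef_succ γ (k+1)
      rw [this]
      have : ((k:ℝ)+1+1) ≠ 0 := by positivity
      push_cast
      field_simp
      ring
    have hrecC : ((k:ℂ)+2) * (gcoef γ (k+2) : ℂ) = (gcoef γ (k+1) : ℂ) * (((k:ℂ)+1) - (γ:ℂ)) := by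
      exact_mod_cast congrArg (Complex.ofReal) hrec
    have : (γ:ℂ) * ((gcoef γ (k+1) : ℂ) * z ^ (k+1))
        + (gcoef γ (k+2) : ℂ) * ((k:ℂ)+2) * z ^ (k+1)
        - (gcoef γ (k+1) : ℂ) * ((k:ℂ)+1) * z ^ (k+1)
        = ((γ:ℂ) * (gcoef γ (k+1) : ℂ) + ((k:ℂ)+2) * (gcoef γ (k+2):ℂ)
          - (gcoef γ (k+1) : ℂ) * ((k:ℂ)+1)) * z ^ (k+1) := by ring
    rw [this, hrecC]
    ring
  rw [hzero] at Hcomb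
  have := Hcomb.unique hasSum_zero
  have h1 : gcoef γ 1 = -γ := gcoef_one γ
  have : (γ:ℂ) * (Sg γ z - 1) + (Dg γ z - (gcoef γ 1 : ℂ)) - z * Dg γ z = 0 := this
  rw [h1] at this
  push_cast at this
  ring_nf at this ⊢
  linear_combination this

lemma Sg_eq_cpow {γ : ℝ} (hγ1 : 1 < γ) (hγ2 : γ < 2) {z : ℂ} (hz : ‖z‖ < 1) :
    Sg γ z = (1 - z) ^ (γ:ℂ) := by
  have hslit : ∀ w : ℂ, ‖w‖ < 1 → (1 - w) ∈ Complex.slitPlane := by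
    intro w hw
    rw [Complex.mem_slitPlane_iff]
    left
    have : w.re ≤ ‖w‖ := (Complex.re_le_norm w)
    simp only [Complex.sub_re, Complex.one_re]
    linarith
  have hne : ∀ w : ℂ, ‖w‖ < 1 → (1:ℂ) - w ≠ 0 := by
    intro w hw
    exact Complex.slitPlane_ne_zero (hslit w hw)
  set E : ℂ → ℂ := fun u => Complex.exp (-(γ:ℂ) * Complex.log (1 - u)) with hE
  have hH : ∀ w ∈ Metric.ball (0:ℂ) 1, HasDerivAt (fun u => Sg γ u * E u) 0 w := by
    intro w hw
    rw [mem_ball_zero_iff] at hw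
    have hlin : HasDerivAt (fun u : ℂ => 1 - u) (-1) w := (hasDerivAt_id w).const_sub 1
    have hlog : HasDerivAt (fun u : ℂ => Complex.log (1 - u)) ((1-w)⁻¹ * (-1)) w :=
      (Complex.hasDerivAt_log (hslit w hw)).comp w hlin
    have hexp : HasDerivAt E (E w * (-(γ:ℂ) * ((1-w)⁻¹ * (-1)))) w := by
      have := ((hlog.const_mul (-(γ:ℂ))).cexp)
      simpa [hE, mul_comm] using this
    have hprod := (hasDerivAt_Sg hγ1 hγ2 hw).mul hexp
    have hng := hne w hw
    have : Dg γ w * E w + Sg γ w * (E w * (-(γ:ℂ) * ((1-w)⁻¹ * (-1)))) = 0 := by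
      have hode := ode_Sg hγ1 hγ2 hw
      field_simp
      linear_combination E w * hode
    rwa [this] at hprod
  have hconst : Sg γ z * E z = Sg γ 0 * E 0 := by
    have hdiff : DifferentiableOn ℂ (fun u => Sg γ u * E u) (Metric.ball (0:ℂ) 1) :=
      fun w hw => ((hH w hw).differentiableAt).differentiableWithinAt
    have hzero : ∀ w ∈ Metric.ball (0:ℂ) 1,
        fderivWithin ℂ (fun u => Sg γ u * E u) (Metric.ball (0:ℂ) 1) w = 0 := by
      intro w hw
      rw [fderivWithin_of_isOpen Metric.isOpen_ball hw,
        (hH w hw).hasFDerivAt.fderiv]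
      ext1
      simp
    exact (convex_ball (0:ℂ) 1).is_const_of_fderivWithin_eq_zero hdiff hzero
      (by rwa [mem_ball_zero_iff]) (by simp)
  have hE0 : E 0 = 1 := by simp [hE]
  have hS0 : Sg γ 0 = 1 := Sg_zero γ
  rw [hE0, hS0, mul_one] at hconst
  have : Sg γ z * E z * Complex.exp ((γ:ℂ) * Complex.log (1 - z)) =
      Complex.exp ((γ:ℂ) * Complex.log (1 - z)) := by rw [hconst, one_mul]
  rw [hE, mul_assoc, ← Complex.exp_add,
    show -(γ:ℂ) * Complex.log (1 - z) + (γ:ℂ) * Complex.log (1 - z) = 0 from by ring,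
    Complex.exp_zero, mul_one] at this
  rw [this, Complex.cpow_def_of_ne_zero (hne z hz), mul_comm]

lemma Sg_one {γ : ℝ} (hγ1 : 1 < γ) (hγ2 : γ < 2) : Sg γ 1 = 0 := by
  have hsum : Summable (fun k : ℕ => (gcoef γ k : ℂ) * (1:ℂ) ^ k) :=
    summable_Sg hγ1 hγ2 (by norm_num)
  have hS : HasSum (fun k : ℕ => (gcoef γ k : ℂ) * (1:ℂ) ^ k) (Sg γ 1) := hsum.hasSum
  rw [hsum.hasSum_iff_tendsto_nat] at hS
  have hps : ∀ n : ℕ, (∑ i ∈ Finset.range (n+1), (gcoef γ i : ℂ) * (1:ℂ) ^ i)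
      = ((gcoef (γ-1) n : ℝ) : ℂ) := by
    intro n
    have := sum_gcoef γ n
    simp only [one_pow, mul_one]
    exact_mod_cast congrArg (Complex.ofReal) this
  have h0 : Tendsto (fun n : ℕ => ∑ i ∈ Finset.range (n+1), (gcoef γ i : ℂ) * (1:ℂ) ^ i)
      atTop (𝓝 0) := by
    simp only [hps]
    rw [show (0:ℂ) = ((0:ℝ):ℂ) from by norm_num]
    apply Tendsto.comp (Complex.continuous_ofReal.tendsto 0)
    exact tendsto_gcoef_zero (by linarith) (by linarith)
  have h0' : Tendsto (fun n : ℕ => ∑ i ∈ Finset.range n, (gcoef γ i : ℂ) * (1:ℂ) ^ i)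
      atTop (𝓝 0) := by
    rw [← tendsto_add_atTop_iff_nat 1]
    exact h0
  exact tendsto_nhds_unique hS h0'

lemma continuousOn_Sg {γ : ℝ} (hγ1 : 1 < γ) (hγ2 : γ < 2) :
    ContinuousOn (Sg γ) (Metric.closedBall (0:ℂ) 1) := by
  apply TendstoUniformlyOn.continuousOn
    (tendstoUniformlyOn_tsum (summable_abs_gcoef hγ1 hγ2)
      (fun k z hz => ?_) (s := Metric.closedBall (0:ℂ) 1))
  · apply Filter.Eventually.frequently
    filter_upwards with n
    apply continuousOn_finset_sum
    intro i _
    exact (continuous_const.mul (continuous_pow i)).continuousOn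
  · rw [mem_closedBall_zero_iff] at hz
    rw [norm_mul, norm_pow, Complex.norm_real]
    calc ‖gcoef γ k‖ * ‖z‖ ^ k ≤ ‖gcoef γ k‖ * 1 :=
          mul_le_mul_of_nonneg_left (pow_le_one₀ (norm_nonneg _) hz) (norm_nonneg _)
      _ = |gcoef γ k| := by rw [mul_one]; rfl

lemma slit_of_ne_one {z : ℂ} (hz : ‖z‖ ≤ 1) (hz1 : z ≠ 1) : (1 - z) ∈ Complex.slitPlane := by
  rw [Complex.mem_slitPlane_iff]
  left
  simp only [Complex.sub_re, Complex.one_re]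
  by_contra h
  push_neg at h
  have hre : 1 ≤ z.re := by linarith
  have hsq : z.re ^ 2 + z.im ^ 2 ≤ 1 := by
    have h1 := Complex.sq_norm z
    rw [Complex.normSq_apply] at h1
    have habs : ‖z‖ ≤ 1 := hz
    nlinarith [norm_nonneg z]
  have him : z.im = 0 := by nlinarith
  have : z.re = 1 := by nlinarith
  exact hz1 (Complex.ext (by simp [this]) (by simp [him]))

lemma Sg_eq_cpow_boundary {γ : ℝ} (hγ1 : 1 < γ) (hγ2 : γ < 2) {z : ℂ} (hz : ‖z‖ ≤ 1)
    (hz1 : z ≠ 1) : Sg γ z = (1 - z) ^ (γ:ℂ) := by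
  rcases lt_or_eq_of_le hz with hlt | heq
  · exact Sg_eq_cpow hγ1 hγ2 hlt
  -- boundary case via radial limit
  have hF : (𝓝[Set.Ico (0:ℝ) 1] (1:ℝ)).NeBot := by
    apply mem_closure_iff_nhdsWithin_neBot.1
    rw [closure_Ico (by norm_num : (0:ℝ) ≠ 1)]
    exact Set.right_mem_Icc.2 (by norm_num)
  have htz : Tendsto (fun t : ℝ => (t:ℂ) * z) (𝓝[Set.Ico (0:ℝ) 1] (1:ℝ)) (𝓝 z) := by
    have : Tendsto (fun t : ℝ => (t:ℂ) * z) (𝓝 (1:ℝ)) (𝓝 ((1:ℂ) * z)) :=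
      ((Complex.continuous_ofReal.mul continuous_const).tendsto 1)
    rw [one_mul] at this
    exact this.mono_left nhdsWithin_le_nhds
  have hmem : ∀ᶠ t : ℝ in 𝓝[Set.Ico (0:ℝ) 1] (1:ℝ), ‖(t:ℂ) * z‖ < 1 := by
    filter_upwards [eventually_mem_nhdsWithin] with t ht
    rw [norm_mul, Complex.norm_real, Real.norm_eq_abs, abs_of_nonneg ht.1]
    calc t * ‖z‖ < 1 * ‖z‖ := by
          apply mul_lt_mul_of_pos_right ht.2
          rw [heq]; norm_num
      _ = 1 := by rw [one_mul, heq]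
  have hA : Tendsto (fun t : ℝ => Sg γ ((t:ℂ) * z)) (𝓝[Set.Ico (0:ℝ) 1] (1:ℝ))
      (𝓝 (Sg γ z)) := by
    have hcw : ContinuousWithinAt (Sg γ) (Metric.closedBall (0:ℂ) 1) z :=
      (continuousOn_Sg hγ1 hγ2) z (by rwa [mem_closedBall_zero_iff])
    apply hcw.tendsto.comp
    rw [tendsto_nhdsWithin_iff]
    refine ⟨htz, ?_⟩
    filter_upwards [hmem] with t ht
    rw [mem_closedBall_zero_iff]
    exact ht.le
  have hC : Tendsto (fun t : ℝ => (1 - (t:ℂ) * z) ^ (γ:ℂ)) (𝓝[Set.Ico (0:ℝ) 1] (1:ℝ))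
      (𝓝 ((1 - z) ^ (γ:ℂ))) := by
    have hcont : ContinuousAt (fun w : ℂ => w ^ (γ:ℂ)) (1 - z) :=
      continuousAt_cpow_const (slit_of_ne_one hz hz1)
    apply hcont.tendsto.comp
    exact (tendsto_const_nhds.sub htz)
  have heqv : ∀ᶠ t : ℝ in 𝓝[Set.Ico (0:ℝ) 1] (1:ℝ),
      Sg γ ((t:ℂ) * z) = (1 - (t:ℂ) * z) ^ (γ:ℂ) := by
    filter_upwards [hmem] with t ht
    exact Sg_eq_cpow hγ1 hγ2 ht
  exact tendsto_nhds_unique (hA.congr' heqv) hC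

open Complex (I)

lemma hasSum_w_z {γ : ℝ} (hγ1 : 1 < γ) (hγ2 : γ < 2) {z : ℂ} (hz : ‖z‖ ≤ 1) :
    HasSum (fun k : ℕ => (w γ k : ℂ) * z ^ k)
      (((γ:ℂ)/2 + ((2-γ:ℝ):ℂ)/2 * z) * Sg γ z) := by
  have HS : HasSum (fun k : ℕ => (gcoef γ k : ℂ) * z ^ k) (Sg γ z) :=
    (summable_Sg hγ1 hγ2 hz).hasSum
  set v : ℕ → ℂ := fun k => Nat.rec 0 (fun k _ => ((2-γ:ℝ):ℂ)/2 * (gcoef γ k : ℂ) * z ^ (k+1)) k with hv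
  have hv0 : v 0 = 0 := rfl
  have hvs : ∀ k, v (k+1) = ((2-γ:ℝ):ℂ)/2 * (gcoef γ k : ℂ) * z ^ (k+1) := fun _ => rfl
  have Hv : HasSum v (((2-γ:ℝ):ℂ)/2 * z * Sg γ z) := by
    rw [← hasSum_nat_add_iff' 1]
    simp only [Finset.range_one, Finset.sum_singleton, hv0, sub_zero]
    apply (HS.mul_left (((2-γ:ℝ):ℂ)/2 * z)).congr_fun
    intro k
    rw [hvs]
    ring
  have Hw := (HS.mul_left ((γ:ℂ)/2)).add Hv
  have hfun : ∀ k, (w γ k : ℂ) * z ^ k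
      = (γ:ℂ)/2 * ((gcoef γ k : ℂ) * z ^ k) + v k := by
    intro k
    cases k with
    | zero => simp [w, hv0, gcoef_zero]
    | succ n =>
        rw [hvs, w]
        push_cast
        ring
  have : (((γ:ℂ)/2 * Sg γ z) + ((2-γ:ℝ):ℂ)/2 * z * Sg γ z)
      = ((γ:ℂ)/2 + ((2-γ:ℝ):ℂ)/2 * z) * Sg γ z := by ring
  rw [← this]
  exact Hw.congr_fun hfun

lemma hasSum_fsym {γ : ℝ} (hγ1 : 1 < γ) (hγ2 : γ < 2) (ξ : ℝ) :
    HasSum (fun k : ℕ => (w γ k : ℂ) * Complex.exp (I * ((k : ℂ) - 1) * (ξ : ℂ)))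
      (Complex.exp (-(I * ξ)) * (((γ:ℂ)/2 + ((2-γ:ℝ):ℂ)/2 * Complex.exp (I * ξ))
        * Sg γ (Complex.exp (I * ξ)))) := by
  have hz : ‖Complex.exp (I * (ξ:ℂ))‖ ≤ 1 := by
    rw [Complex.norm_exp]
    simp
  have H := (hasSum_w_z hγ1 hγ2 hz).mul_left (Complex.exp (-(I * ξ)))
  apply H.congr_fun
  intro k
  rw [show I * ((k : ℂ) - 1) * (ξ : ℂ) = -(I * ξ) + (k : ℂ) * (I * ξ) from by ring,
    Complex.exp_add, Complex.exp_nat_mul]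
  ring

lemma fsym_closed {γ : ℝ} (hγ1 : 1 < γ) (hγ2 : γ < 2) (ξ : ℝ) :
    fsym γ ξ = -(Complex.exp (-(I * ξ)) * (((γ:ℂ)/2 + ((2-γ:ℝ):ℂ)/2 * Complex.exp (I * ξ))
      * Sg γ (Complex.exp (I * ξ)))) := by
  rw [fsym, (hasSum_fsym hγ1 hγ2 ξ).tsum_eq]

lemma fsym_zero {γ : ℝ} (hγ1 : 1 < γ) (hγ2 : γ < 2) : fsym γ 0 = 0 := by
  rw [fsym_closed hγ1 hγ2]
  push_cast
  rw [show I * (0:ℂ) = 0 from by ring, Complex.exp_zero, Sg_one hγ1 hγ2]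
  ring

lemma qsym_zero {γ : ℝ} (hγ1 : 1 < γ) (hγ2 : γ < 2) : qsym γ 0 = 0 := by
  simp [qsym, neg_zero, fsym_zero hγ1 hγ2]

lemma fsym_neg {γ : ℝ} (hγ1 : 1 < γ) (hγ2 : γ < 2) (ξ : ℝ) :
    fsym γ (-ξ) = (starRingEnd ℂ) (fsym γ ξ) := by
  have H := hasSum_fsym hγ1 hγ2 ξ
  have Hc := H.map (starRingEnd ℂ) (Complex.continuous_conj)
  have hfun : ∀ k : ℕ, ((starRingEnd ℂ) ∘ fun k : ℕ =>
      (w γ k : ℂ) * Complex.exp (I * ((k : ℂ) - 1) * (ξ : ℂ))) k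
      = (w γ k : ℂ) * Complex.exp (I * ((k : ℂ) - 1) * ((-ξ : ℝ) : ℂ)) := by
    intro k
    simp only [Function.comp_apply, map_mul, Complex.conj_ofReal, ← Complex.exp_conj]
    congr 2
    simp only [map_mul, map_sub, Complex.conj_I, Complex.conj_ofReal, Complex.conj_natCast,
      Complex.ofReal_neg, map_one]
    ring
  have H2 := Hc.congr_fun (fun k => (hfun k).symm)
  rw [fsym, H2.tsum_eq, fsym, (hasSum_fsym hγ1 hγ2 ξ).tsum_eq, map_neg]

lemma qsym_re_eq {γ : ℝ} (hγ1 : 1 < γ) (hγ2 : γ < 2) (ξ : ℝ) :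
    (qsym γ ξ).re = 2 * (fsym γ ξ).re := by
  rw [qsym, fsym_neg hγ1 hγ2, Complex.add_conj]
  simp

lemma one_sub_exp_polar (ξ : ℝ) :
    1 - Complex.exp (I * ξ)
      = ((2 * Real.sin (ξ/2) : ℝ) : ℂ) * Complex.exp ((((ξ/2 - Real.pi/2 : ℝ)):ℂ) * I) := by
  set P := Complex.exp (((ξ/2:ℝ):ℂ) * I) with hP
  set Q := Complex.exp (-(((ξ/2:ℝ):ℂ)) * I) with hQ
  have hPQ : P * Q = 1 := by
    rw [hP, hQ, ← Complex.exp_add, show ((ξ/2:ℝ):ℂ) * I + -(((ξ/2:ℝ):ℂ)) * I = 0 from by ring,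
      Complex.exp_zero]
  have eP : Complex.exp (I * (ξ:ℂ)) = P * P := by
    rw [hP, ← Complex.exp_add]
    congr 1
    push_cast
    ring
  have hsin : ((Real.sin (ξ/2) : ℝ) : ℂ) = (Q - P) * I / 2 := by
    rw [Complex.ofReal_sin]; rfl
  have epi : Complex.exp ((((ξ/2 - Real.pi/2 : ℝ)):ℂ) * I) = P * (-I) := by
    rw [show ((((ξ/2 - Real.pi/2 : ℝ)):ℂ)) * I
        = ((ξ/2:ℝ):ℂ) * I + ((-(Real.pi/2):ℝ):ℂ) * I from by push_cast; ring,
      Complex.exp_add, hP]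
    congr 1
    rw [Complex.exp_mul_I, ← Complex.ofReal_cos, ← Complex.ofReal_sin]
    simp
  rw [epi, eP, Complex.ofReal_mul, hsin]
  push_cast
  linear_combination -hPQ + (Q - P) * P * Complex.I_sq

lemma exp_I_ne_one {ξ : ℝ} (h0 : 0 < ξ) (hπ : ξ < Real.pi) :
    Complex.exp (I * ξ) ≠ 1 := by
  intro h
  rw [Complex.exp_eq_one_iff] at h
  obtain ⟨n, hn⟩ := h
  have him : ξ = (n:ℝ) * (2 * Real.pi) := by
    have := congrArg Complex.im hn
    simpa using this
  have hπ2 : Real.pi < 2 * Real.pi := by linarith [Real.pi_pos]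
  rcases le_or_gt n 0 with hn0 | hn0
  · have : (n:ℝ) ≤ 0 := by exact_mod_cast hn0
    nlinarith [Real.pi_pos]
  · have h1 : (1:ℤ) ≤ n := hn0
    have : (1:ℝ) ≤ (n:ℝ) := by exact_mod_cast h1
    nlinarith [Real.pi_pos]

lemma cpow_one_sub_exp {γ : ℝ} {ξ : ℝ} (h0 : 0 < ξ) (hπ : ξ < Real.pi) :
    (1 - Complex.exp (I * ξ)) ^ (γ:ℂ)
      = (((2 * Real.sin (ξ/2)) ^ γ : ℝ) : ℂ)
        * Complex.exp ((((γ * (ξ/2 - Real.pi/2) : ℝ)):ℂ) * I) := by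
  have hsin : 0 < Real.sin (ξ/2) :=
    Real.sin_pos_of_pos_of_lt_pi (by linarith) (by linarith [Real.pi_pos])
  have hs : 0 < 2 * Real.sin (ξ/2) := by linarith
  set s := 2 * Real.sin (ξ/2) with hsdef
  set φ := ξ/2 - Real.pi/2 with hφdef
  have hφ1 : -Real.pi < φ := by rw [hφdef]; linarith [Real.pi_pos]
  have hφ2 : φ ≤ Real.pi := by rw [hφdef]; linarith [Real.pi_pos]
  have hw : 1 - Complex.exp (I*ξ) = Complex.exp (((Real.log s : ℝ):ℂ) + ((φ:ℝ):ℂ) * I) := by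
    rw [one_sub_exp_polar, Complex.exp_add, ← Complex.ofReal_exp, Real.exp_log hs]
  have hlog : Complex.log (1 - Complex.exp (I*ξ)) = ((Real.log s : ℝ):ℂ) + ((φ:ℝ):ℂ) * I := by
    rw [hw, Complex.log_exp] <;> simp [hφ1, hφ2]
  have hne : (1 - Complex.exp (I*ξ)) ≠ 0 := by rw [hw]; exact Complex.exp_ne_zero _
  rw [Complex.cpow_def_of_ne_zero hne, hlog,
    show ((((Real.log s : ℝ):ℂ)) + ((φ:ℝ):ℂ)*I) * (γ:ℂ)
      = (((Real.log s * γ : ℝ)):ℂ) + (((γ*φ : ℝ)):ℂ)*I from by push_cast; ring,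
    Complex.exp_add]
  congr 1
  rw [← Complex.ofReal_exp, Real.rpow_def_of_pos hs]

noncomputable def Gf (γ : ℝ) (ξ : ℝ) : ℂ :=
  Complex.exp (-(I * ξ)) * ((γ:ℂ)/2 + ((2-γ:ℝ):ℂ)/2 * Complex.exp (I * ξ))
    * Complex.exp ((((γ * (ξ/2 - Real.pi/2) : ℝ)):ℂ) * I)

lemma fsym_re_eq {γ : ℝ} (hγ1 : 1 < γ) (hγ2 : γ < 2) {ξ : ℝ} (h0 : 0 < ξ) (hπ : ξ < Real.pi) :
    (fsym γ ξ).re = -((2 * Real.sin (ξ/2)) ^ γ * (Gf γ ξ).re) := by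
  have hz : ‖Complex.exp (I * (ξ:ℂ))‖ ≤ 1 := by
    rw [Complex.norm_exp]
    simp
  have hSg : Sg γ (Complex.exp (I * ξ)) = (1 - Complex.exp (I * ξ)) ^ (γ:ℂ) :=
    Sg_eq_cpow_boundary hγ1 hγ2 hz (exp_I_ne_one h0 hπ)
  rw [fsym_closed hγ1 hγ2, hSg, cpow_one_sub_exp h0 hπ]
  rw [show Complex.exp (-(I * ξ)) * (((γ:ℂ)/2 + ((2-γ:ℝ):ℂ)/2 * Complex.exp (I * ξ))
      * ((((2 * Real.sin (ξ/2)) ^ γ : ℝ):ℂ)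
        * Complex.exp ((((γ * (ξ/2 - Real.pi/2) : ℝ)):ℂ) * I)))
    = (((2 * Real.sin (ξ/2)) ^ γ : ℝ):ℂ) * Gf γ ξ from by rw [Gf]; ring]
  simp [Complex.mul_re]

lemma Gf_continuous (γ : ℝ) : Continuous (Gf γ) := by
  unfold Gf
  fun_prop

lemma Gf_zero_re (γ : ℝ) : (Gf γ 0).re = Real.cos (γ * Real.pi / 2) := by
  have h1 : (γ:ℂ)/2 + ((2-γ:ℝ):ℂ)/2 * Complex.exp (I * (0:ℝ)) = 1 := by
    push_cast
    rw [show I * (0:ℂ) = 0 from by ring, Complex.exp_zero]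
    ring
  unfold Gf
  rw [show -(I * ((0:ℝ):ℂ)) = 0 from by push_cast; ring, Complex.exp_zero, one_mul, h1, one_mul]
  rw [Complex.exp_ofReal_mul_I_re]
  rw [show γ * ((0:ℝ)/2 - Real.pi/2) = -(γ * Real.pi / 2) from by ring, Real.cos_neg]

lemma tendsto_sin_half_div (h : True) :
    Tendsto (fun ξ : ℝ => 2 * Real.sin (ξ/2) / ξ) (𝓝[>] (0:ℝ)) (𝓝 1) := by
  have hd := Real.hasDerivAt_sin 0
  rw [hasDerivAt_iff_tendsto_slope] at hd
  rw [Real.cos_zero] at hd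
  have hs : Tendsto (fun y : ℝ => Real.sin y / y) (𝓝[≠] (0:ℝ)) (𝓝 1) := by
    apply hd.congr'
    filter_upwards [eventually_mem_nhdsWithin] with y hy
    rw [slope_def_field, Real.sin_zero, sub_zero, sub_zero]
  have hhalf : Tendsto (fun ξ : ℝ => ξ/2) (𝓝[>] (0:ℝ)) (𝓝[≠] (0:ℝ)) := by
    rw [tendsto_nhdsWithin_iff]
    constructor
    · have : Tendsto (fun ξ : ℝ => ξ/2) (𝓝 0) (𝓝 (0/2)) :=
        (continuous_id.div_const 2).tendsto 0
      rw [zero_div] at this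
      exact this.mono_left nhdsWithin_le_nhds
    · filter_upwards [eventually_mem_nhdsWithin] with ξ hξ
      have : (0:ℝ) < ξ := hξ
      simp only [Set.mem_compl_iff, Set.mem_singleton_iff]
      positivity
  have := hs.comp hhalf
  apply this.congr'
  filter_upwards [eventually_mem_nhdsWithin] with ξ hξ
  have hne : (ξ:ℝ) ≠ 0 := ne_of_gt hξ
  simp only [Function.comp_apply]
  field_simp

lemma tendsto_fsym_re_div {γ : ℝ} (hγ1 : 1 < γ) (hγ2 : γ < 2) :
    Tendsto (fun ξ : ℝ => (fsym γ ξ).re / ξ ^ γ) (𝓝[>] (0:ℝ))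
      (𝓝 (-Real.cos (γ * Real.pi / 2))) := by
  have h1 : Tendsto (fun ξ : ℝ => (2 * Real.sin (ξ/2) / ξ) ^ γ) (𝓝[>] (0:ℝ)) (𝓝 1) := by
    have := (tendsto_sin_half_div trivial).rpow_const (p := γ) (Or.inl one_ne_zero)
    rwa [Real.one_rpow] at this
  have h2 : Tendsto (fun ξ : ℝ => (Gf γ ξ).re) (𝓝[>] (0:ℝ)) (𝓝 (Real.cos (γ * Real.pi / 2))) := by
    rw [← Gf_zero_re γ]
    exact ((Complex.continuous_re.comp (Gf_continuous γ)).tendsto 0).mono_left nhdsWithin_le_nhds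
  have h3 := (h1.mul h2).neg
  rw [one_mul] at h3
  apply h3.congr'
  have hIoo : Set.Ioo (0:ℝ) Real.pi ∈ 𝓝[>] (0:ℝ) :=
    Ioo_mem_nhdsGT_of_mem ⟨le_refl 0, Real.pi_pos⟩
  filter_upwards [hIoo] with ξ hξ
  obtain ⟨h0, hπ⟩ := hξ
  have hsin : 0 < Real.sin (ξ/2) :=
    Real.sin_pos_of_pos_of_lt_pi (by linarith) (by linarith [Real.pi_pos])
  have hξγ : 0 < ξ ^ γ := Real.rpow_pos_of_pos h0 γ
  rw [fsym_re_eq hγ1 hγ2 h0 hπ]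
  rw [Real.div_rpow (by linarith) h0.le]
  field_simp

lemma qsym_abs_right {γ : ℝ} (hγ1 : 1 < γ) (hγ2 : γ < 2) :
    Tendsto (fun ξ : ℝ => (qsym γ ξ).re / |ξ| ^ γ) (𝓝[>] (0:ℝ))
      (𝓝 (-2 * Real.cos (γ * Real.pi / 2))) := by
  have h := ((tendsto_fsym_re_div hγ1 hγ2).const_mul 2)
  rw [show (2:ℝ) * -Real.cos (γ * Real.pi / 2) = -2 * Real.cos (γ * Real.pi / 2) from by ring] at h
  apply h.congr'
  filter_upwards [eventually_mem_nhdsWithin] with ξ hξ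
  have h0 : (0:ℝ) < ξ := hξ
  rw [qsym_re_eq hγ1 hγ2, abs_of_pos h0]
  ring

lemma qsym_re_even (γ ξ : ℝ) : (qsym γ (-ξ)).re = (qsym γ ξ).re := by
  rw [qsym, qsym, neg_neg, add_comm]

lemma tendsto_qsym {γ : ℝ} (hγ1 : 1 < γ) (hγ2 : γ < 2) :
    Tendsto (fun ξ : ℝ => (qsym γ ξ).re / |ξ| ^ γ) (𝓝[≠] (0:ℝ))
      (𝓝 (-2 * Real.cos (γ * Real.pi / 2))) := by
  have hsplit : 𝓝[≠] (0:ℝ) = 𝓝[Set.Iio 0] 0 ⊔ 𝓝[Set.Ioi 0] 0 := by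
    rw [← nhdsWithin_union, Set.Iio_union_Ioi]
  rw [hsplit, tendsto_sup]
  constructor
  · have hneg : Tendsto (fun ξ : ℝ => -ξ) (𝓝[Set.Iio (0:ℝ)] 0) (𝓝[>] (0:ℝ)) := by
      rw [tendsto_nhdsWithin_iff]
      constructor
      · have : Tendsto (fun ξ : ℝ => -ξ) (𝓝 0) (𝓝 (-0)) := (continuous_neg.tendsto 0)
        rw [neg_zero] at this
        exact this.mono_left nhdsWithin_le_nhds
      · filter_upwards [eventually_mem_nhdsWithin] with ξ hξ
        have : ξ < 0 := hξ
        exact Set.mem_Ioi.2 (by linarith)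
    have := (qsym_abs_right hγ1 hγ2).comp hneg
    apply this.congr
    intro ξ
    simp only [Function.comp_apply]
    rw [qsym_re_even, abs_neg]
  · exact qsym_abs_right hγ1 hγ2

lemma cos_gamma_mem {γ : ℝ} (h1 : 1 < γ) (h2 : γ < 2) :
    Real.cos (γ * Real.pi / 2) ∈ Set.Ioo (-1 : ℝ) 0 := by
  have hπ := Real.pi_pos
  have hx : γ * Real.pi / 2 = Real.pi - (2 - γ) * Real.pi / 2 := by ring
  rw [hx, Real.cos_pi_sub]
  have hy1 : 0 < (2 - γ) * Real.pi / 2 := by nlinarith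
  have hy2 : (2 - γ) * Real.pi / 2 < Real.pi / 2 := by nlinarith
  have hpos : 0 < Real.cos ((2 - γ) * Real.pi / 2) :=
    Real.cos_pos_of_mem_Ioo ⟨by linarith, hy2⟩
  have hne : Real.cos ((2 - γ) * Real.pi / 2) ≠ 1 := by
    intro h
    rw [Real.cos_eq_one_iff_of_lt_of_lt (by nlinarith) (by nlinarith)] at h
    nlinarith
  have hlt : Real.cos ((2 - γ) * Real.pi / 2) < 1 :=
    lt_of_le_of_ne (Real.cos_le_one _) hne
  constructor <;> [linarith; linarith]

/-- The Euclidean-style norm used in the statement. -/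
noncomputable def rr (θ : ℝ × ℝ) : ℝ := Real.sqrt (θ.1 ^ 2 + θ.2 ^ 2)

lemma rr_continuous : Continuous rr :=
  Real.continuous_sqrt.comp (((continuous_fst.pow 2)).add ((continuous_snd.pow 2)))

lemma rr_zero : rr 0 = 0 := by simp [rr]

lemma rr_pos {θ : ℝ × ℝ} (h : θ ≠ 0) : 0 < rr θ := by
  rw [rr, Real.sqrt_pos]
  rcases lt_trichotomy (θ.1 ^ 2 + θ.2 ^ 2) 0 with hlt | heq | hgt
  · nlinarith [sq_nonneg θ.1, sq_nonneg θ.2]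
  · exfalso
    apply h
    have h1 : θ.1 = 0 := by nlinarith [sq_nonneg θ.1, sq_nonneg θ.2]
    have h2 : θ.2 = 0 := by nlinarith [sq_nonneg θ.1, sq_nonneg θ.2]
    exact Prod.ext h1 h2
  · exact hgt

lemma rr_rpow (θ : ℝ × ℝ) (γ : ℝ) :
    (θ.1 ^ 2 + θ.2 ^ 2) ^ (γ / 2) = rr θ ^ γ := by
  have h0 : (0:ℝ) ≤ θ.1 ^ 2 + θ.2 ^ 2 := by positivity
  rw [rr, Real.sqrt_eq_rpow, ← Real.rpow_mul h0]
  rw [show 1 / 2 * γ = γ / 2 from by ring]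

lemma abs_fst_le_rr (θ : ℝ × ℝ) : |θ.1| ≤ rr θ := by
  rw [rr, ← Real.sqrt_sq_eq_abs]
  exact Real.sqrt_le_sqrt (by nlinarith [sq_nonneg θ.2])

lemma abs_snd_le_rr (θ : ℝ × ℝ) : |θ.2| ≤ rr θ := by
  rw [rr, ← Real.sqrt_sq_eq_abs]
  exact Real.sqrt_le_sqrt (by nlinarith [sq_nonneg θ.1])

lemma abs_sq_rpow (t : ℝ) (γ : ℝ) : (t ^ 2 + (0:ℝ) ^ 2) ^ (γ / 2) = |t| ^ γ := by
  have h := rr_rpow (t, 0) γ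
  simp only at h
  rw [h, rr]
  norm_num [Real.sqrt_sq_eq_abs]

/-- bound valid in a punctured or full neighbourhood. -/
lemma qsym_bound {γ : ℝ} (hγ1 : 1 < γ) (hγ2 : γ < 2) {C : ℝ}
    (hC : -2 * Real.cos (γ * Real.pi / 2) < C) :
    ∃ δ > 0, ∀ ξ : ℝ, |ξ| < δ → (qsym γ ξ).re ≤ C * |ξ| ^ γ := by
  have hev : ∀ᶠ ξ in 𝓝[≠] (0:ℝ), (qsym γ ξ).re / |ξ| ^ γ < C :=
    (tendsto_qsym hγ1 hγ2).eventually_lt_const hC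
  rw [Metric.nhdsWithin_basis_ball.eventually_iff] at hev
  obtain ⟨δ, hδ0, hδ⟩ := hev
  refine ⟨δ, hδ0, fun ξ hξ => ?_⟩
  rcases eq_or_ne ξ 0 with rfl | hne
  · rw [qsym_zero hγ1 hγ2]
    simp [Real.zero_rpow (by positivity : γ ≠ 0)]
  · have hmem : ξ ∈ Metric.ball (0:ℝ) δ ∩ {(0:ℝ)}ᶜ := by
      constructor
      · rwa [Metric.mem_ball, Real.dist_eq, sub_zero]
      · exact hne
    have := hδ hmem
    have hpos : 0 < |ξ| ^ γ := Real.rpow_pos_of_pos (abs_pos.2 hne) γ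
    calc (qsym γ ξ).re = ((qsym γ ξ).re / |ξ| ^ γ) * |ξ| ^ γ := by field_simp
      _ ≤ C * |ξ| ^ γ := mul_le_mul_of_nonneg_right this.le hpos.le

lemma limsup_helper {γ₁ γ₂ c₁ c₂ : ℝ} (h11 : 1 < γ₁) (h12 : γ₁ < 2)
    (h21 : 1 < γ₂) (h22 : γ₂ < 2) (hlt : γ₁ < γ₂) (hc1 : 0 < c₁) (hc2 : 0 < c₂) :
    limsup (fun θ : ℝ × ℝ => (c₁ * (qsym γ₁ θ.1).re + c₂ * (qsym γ₂ θ.2).re)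
      / (θ.1 ^ 2 + θ.2 ^ 2) ^ (γ₁ / 2)) (𝓝[≠] (0 : ℝ × ℝ))
      = c₁ * (-2 * Real.cos (γ₁ * Real.pi / 2)) := by
  set L₁ : ℝ := -2 * Real.cos (γ₁ * Real.pi / 2) with hL₁def
  set L₂ : ℝ := -2 * Real.cos (γ₂ * Real.pi / 2) with hL₂def
  have hL₁ : 0 < L₁ := by
    have := (cos_gamma_mem h11 h12).2
    rw [hL₁def]; linarith
  have hL₂ : 0 < L₂ := by
    have := (cos_gamma_mem h21 h22).2
    rw [hL₂def]; linarith
  set F : ℝ × ℝ → ℝ := fun θ => (c₁ * (qsym γ₁ θ.1).re + c₂ * (qsym γ₂ θ.2).re)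
      / (θ.1 ^ 2 + θ.2 ^ 2) ^ (γ₁ / 2) with hFdef
  set K : ℝ := c₂ * (L₂ + 1) with hKdef
  have hK : 0 < K := by rw [hKdef]; positivity
  -- upper bound
  have hub : ∀ ε : ℝ, 0 < ε → ∀ᶠ θ in 𝓝[≠] (0 : ℝ × ℝ), F θ ≤ c₁ * L₁ + ε := by
    intro ε hε
    set ε₁ : ℝ := ε / (2 * c₁) with hε₁def
    have hε₁ : 0 < ε₁ := by rw [hε₁def]; positivity
    obtain ⟨δ₁, hδ₁0, hδ₁⟩ := qsym_bound h11 h12 (C := L₁ + ε₁) (by linarith)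
    obtain ⟨δ₂, hδ₂0, hδ₂⟩ := qsym_bound h21 h22 (C := L₂ + 1) (by linarith)
    set δ₃ : ℝ := (ε / (2 * K)) ^ (γ₂ - γ₁)⁻¹ with hδ₃def
    have hδ₃0 : 0 < δ₃ := by
      rw [hδ₃def]
      apply Real.rpow_pos_of_pos
      positivity
    set δ : ℝ := min (min δ₁ δ₂) δ₃ with hδdef
    have hδ0 : 0 < δ := lt_min (lt_min hδ₁0 hδ₂0) hδ₃0
    have hev : ∀ᶠ θ in 𝓝[≠] (0 : ℝ × ℝ), rr θ < δ :=
      (((rr_continuous.tendsto' 0 0 rr_zero).eventually_lt_const hδ0).filter_mono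
        nhdsWithin_le_nhds)
    filter_upwards [hev, eventually_mem_nhdsWithin] with θ hrδ hθ0
    have hθne : θ ≠ 0 := hθ0
    have hr : 0 < rr θ := rr_pos hθne
    have hrγ₁ : 0 < rr θ ^ γ₁ := Real.rpow_pos_of_pos hr γ₁
    have h1le : |θ.1| ≤ rr θ := abs_fst_le_rr θ
    have h2le : |θ.2| ≤ rr θ := abs_snd_le_rr θ
    have hQ1 : (qsym γ₁ θ.1).re ≤ (L₁ + ε₁) * rr θ ^ γ₁ := by
      calc (qsym γ₁ θ.1).re ≤ (L₁ + ε₁) * |θ.1| ^ γ₁ :=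
            hδ₁ θ.1 (lt_of_le_of_lt h1le (lt_of_lt_of_le hrδ
              (le_trans (min_le_left _ _) (min_le_left _ _))))
        _ ≤ (L₁ + ε₁) * rr θ ^ γ₁ := by
            apply mul_le_mul_of_nonneg_left _ (by linarith)
            exact Real.rpow_le_rpow (abs_nonneg _) h1le (by linarith)
    have hQ2 : (qsym γ₂ θ.2).re ≤ (L₂ + 1) * rr θ ^ γ₂ := by
      calc (qsym γ₂ θ.2).re ≤ (L₂ + 1) * |θ.2| ^ γ₂ :=
            hδ₂ θ.2 (lt_of_le_of_lt h2le (lt_of_lt_of_le hrδ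
              (le_trans (min_le_left _ _) (min_le_right _ _))))
        _ ≤ (L₂ + 1) * rr θ ^ γ₂ := by
            apply mul_le_mul_of_nonneg_left _ (by linarith)
            exact Real.rpow_le_rpow (abs_nonneg _) h2le (by linarith)
    have hnum : c₁ * (qsym γ₁ θ.1).re + c₂ * (qsym γ₂ θ.2).re
        ≤ c₁ * (L₁ + ε₁) * rr θ ^ γ₁ + K * rr θ ^ γ₂ := by
      rw [hKdef]
      nlinarith [hQ1, hQ2]
    have hsplit : rr θ ^ γ₂ = rr θ ^ γ₁ * rr θ ^ (γ₂ - γ₁) := by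
      rw [← Real.rpow_add hr]
      congr 1
      ring
    have hsmall : K * rr θ ^ (γ₂ - γ₁) ≤ ε / 2 := by
      have hrle : rr θ ^ (γ₂ - γ₁) ≤ δ₃ ^ (γ₂ - γ₁) :=
        Real.rpow_le_rpow hr.le (le_of_lt (lt_of_lt_of_le hrδ (min_le_right _ _)))
          (by linarith)
      have hδ₃pow : δ₃ ^ (γ₂ - γ₁) = ε / (2 * K) := by
        rw [hδ₃def, ← Real.rpow_mul (by positivity : (0:ℝ) ≤ ε / (2 * K)),
          inv_mul_cancel₀ (by linarith : γ₂ - γ₁ ≠ 0), Real.rpow_one]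
      rw [hδ₃pow] at hrle
      calc K * rr θ ^ (γ₂ - γ₁) ≤ K * (ε / (2 * K)) :=
            mul_le_mul_of_nonneg_left hrle hK.le
        _ = ε / 2 := by field_simp
    have hF : F θ = (c₁ * (qsym γ₁ θ.1).re + c₂ * (qsym γ₂ θ.2).re) / rr θ ^ γ₁ := by
      rw [hFdef]
      simp only
      rw [rr_rpow]
    rw [hF]
    rw [div_le_iff₀ hrγ₁]
    have hc₁ε₁ : c₁ * ε₁ = ε / 2 := by
      rw [hε₁def]
      field_simp
    calc c₁ * (qsym γ₁ θ.1).re + c₂ * (qsym γ₂ θ.2).re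
        ≤ c₁ * (L₁ + ε₁) * rr θ ^ γ₁ + K * rr θ ^ γ₂ := hnum
      _ = (c₁ * L₁ + ε / 2 + K * rr θ ^ (γ₂ - γ₁)) * rr θ ^ γ₁ := by
          rw [hsplit, ← hc₁ε₁]
          ring
      _ ≤ (c₁ * L₁ + ε / 2 + ε / 2) * rr θ ^ γ₁ := by
          apply mul_le_mul_of_nonneg_right _ hrγ₁.le
          linarith
      _ = (c₁ * L₁ + ε) * rr θ ^ γ₁ := by ring
  -- lower bound (frequently)
  have hlow : ∀ ε : ℝ, 0 < ε → ∃ᶠ θ in 𝓝[≠] (0 : ℝ × ℝ), c₁ * L₁ - ε ≤ F θ := by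
    intro ε hε
    set j : ℝ → ℝ × ℝ := fun t => (t, 0) with hjdef
    have hjten : Tendsto j (𝓝[≠] (0:ℝ)) (𝓝[≠] (0:ℝ×ℝ)) := by
      rw [tendsto_nhdsWithin_iff]
      constructor
      · have : Tendsto j (𝓝 0) (𝓝 (0, 0)) :=
          (continuous_id.prodMk continuous_const).tendsto' 0 (0, 0) rfl
        exact (this.mono_left nhdsWithin_le_nhds)
      · filter_upwards [eventually_mem_nhdsWithin] with t ht
        intro hcontra
        apply ht
        have := congrArg Prod.fst hcontra
        simpa [hjdef] using this
    have hcomp : Tendsto (fun t : ℝ => F (j t)) (𝓝[≠] (0:ℝ)) (𝓝 (c₁ * L₁)) := by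
      have hqt := (tendsto_qsym h11 h12).const_mul c₁
      apply hqt.congr'
      filter_upwards with t
      rw [hFdef, hjdef]
      simp only
      rw [qsym_zero h21 h22]
      simp only [Complex.zero_re, mul_zero, add_zero]
      rw [abs_sq_rpow t γ₁]
      ring
    have hevt : ∀ᶠ t in 𝓝[≠] (0:ℝ), c₁ * L₁ - ε ≤ F (j t) := by
      filter_upwards [hcomp.eventually_const_lt (by linarith : c₁ * L₁ - ε < c₁ * L₁)]
        with t ht using ht.le
    have hfreq : ∃ᶠ t in 𝓝[≠] (0:ℝ), c₁ * L₁ - ε ≤ F (j t) := hevt.frequently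
    have : ∃ᶠ θ in Filter.map j (𝓝[≠] (0:ℝ)), c₁ * L₁ - ε ≤ F θ :=
      Filter.frequently_map.2 hfreq
    exact this.filter_mono hjten
  have hbdd : IsBoundedUnder (· ≤ ·) (𝓝[≠] (0:ℝ×ℝ)) F :=
    ⟨c₁ * L₁ + 1, eventually_map.2 (hub 1 one_pos)⟩
  have hcob : IsCoboundedUnder (· ≤ ·) (𝓝[≠] (0:ℝ×ℝ)) F :=
    Filter.IsCoboundedUnder.of_frequently_ge (hlow 1 one_pos)
  apply le_antisymm
  · apply le_of_forall_pos_le_add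
    intro ε hε
    exact Filter.limsup_le_of_le hcob (hub ε hε)
  · by_contra hcon
    push_neg at hcon
    set ε := (c₁ * L₁ - limsup F (𝓝[≠] (0:ℝ×ℝ))) with hεdef
    have hε : 0 < ε := by rw [hεdef]; linarith
    have := Filter.le_limsup_of_frequently_le (hlow (ε/2) (by linarith)) hbdd
    rw [hεdef] at this
    linarith

lemma map_swap_punctured :
    Filter.map (Prod.swap : ℝ × ℝ → ℝ × ℝ) (𝓝[≠] (0 : ℝ × ℝ)) = 𝓝[≠] (0 : ℝ × ℝ) := by
  have h := (Homeomorph.prodComm ℝ ℝ).map_punctured_nhds_eq 0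
  simpa using h

lemma limsup_comp_swap (G : ℝ × ℝ → ℝ) :
    limsup (G ∘ Prod.swap) (𝓝[≠] (0 : ℝ × ℝ)) = limsup G (𝓝[≠] (0 : ℝ × ℝ)) := by
  conv_rhs => rw [← map_swap_punctured]
  rw [Filter.limsup, Filter.limsup, Filter.map_map]

/-- The limsup of `𝓕_{(α,β)}(θ)/|θ|^γ` with `γ = min{α,β}` as `θ → (0,0)` is bounded
between two positive constants; explicitly it is at most `-2d·cos(απ/2) ∈ (0,2d)` when
`γ = α` and at most `-2eρ·cos(βπ/2) ∈ (0,2eρ)` when `γ = β`. -/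
theorem Fsym_limsup_bounded (α β d e ρ : ℝ)
    (hα : α ∈ Set.Ioo (1 : ℝ) 2) (hβ : β ∈ Set.Ioo (1 : ℝ) 2) (hαβ : α ≠ β)
    (hd : 0 < d) (he : 0 < e) (hρ : 0 < ρ) :
    ∃ C₁ C₂ : ℝ, 0 < C₁ ∧ 0 < C₂ ∧
      C₁ < limsup (fun θ : ℝ × ℝ =>
          Fsym α β d e ρ θ / (θ.1 ^ 2 + θ.2 ^ 2) ^ (min α β / 2)) (𝓝[≠] (0 : ℝ × ℝ)) ∧
      limsup (fun θ : ℝ × ℝ =>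
          Fsym α β d e ρ θ / (θ.1 ^ 2 + θ.2 ^ 2) ^ (min α β / 2)) (𝓝[≠] (0 : ℝ × ℝ)) < C₂ ∧
      (min α β = α →
        limsup (fun θ : ℝ × ℝ =>
            Fsym α β d e ρ θ / (θ.1 ^ 2 + θ.2 ^ 2) ^ (min α β / 2)) (𝓝[≠] (0 : ℝ × ℝ))
          ≤ -2 * d * Real.cos (α * Real.pi / 2) ∧
        -2 * d * Real.cos (α * Real.pi / 2) ∈ Set.Ioo 0 (2 * d)) ∧
      (min α β = β →
        limsup (fun θ : ℝ × ℝ =>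
            Fsym α β d e ρ θ / (θ.1 ^ 2 + θ.2 ^ 2) ^ (min α β / 2)) (𝓝[≠] (0 : ℝ × ℝ))
          ≤ -2 * e * ρ * Real.cos (β * Real.pi / 2) ∧
        -2 * e * ρ * Real.cos (β * Real.pi / 2) ∈ Set.Ioo 0 (2 * e * ρ)) := by
  obtain ⟨hα1, hα2⟩ := hα
  obtain ⟨hβ1, hβ2⟩ := hβ
  rcases lt_or_gt_of_ne hαβ with hltc | hgtc
  · -- α < β, min = α
    have hmin : min α β = α := min_eq_left hltc.le
    have hcosα := cos_gamma_mem hα1 hα2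
    have hfun : (fun θ : ℝ × ℝ => Fsym α β d e ρ θ / (θ.1 ^ 2 + θ.2 ^ 2) ^ (min α β / 2))
        = fun θ : ℝ × ℝ => (d * (qsym α θ.1).re + (e * ρ) * (qsym β θ.2).re)
            / (θ.1 ^ 2 + θ.2 ^ 2) ^ (α / 2) := by
      funext θ
      rw [hmin, Fsym]
    have hls : limsup (fun θ : ℝ × ℝ =>
        Fsym α β d e ρ θ / (θ.1 ^ 2 + θ.2 ^ 2) ^ (min α β / 2)) (𝓝[≠] (0 : ℝ × ℝ))
        = d * (-2 * Real.cos (α * Real.pi / 2)) := by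
      rw [hfun]
      exact limsup_helper hα1 hα2 hβ1 hβ2 hltc hd (by positivity)
    have hL : 0 < d * (-2 * Real.cos (α * Real.pi / 2)) :=
      mul_pos hd (by linarith [hcosα.2])
    refine ⟨d * (-2 * Real.cos (α * Real.pi / 2)) / 2,
      d * (-2 * Real.cos (α * Real.pi / 2)) + 1, by positivity, by positivity, ?_, ?_, ?_, ?_⟩
    · rw [hls]; linarith
    · rw [hls]; linarith
    · intro _
      refine ⟨by rw [hls]; nlinarith, ?_, ?_⟩
      · nlinarith [mul_pos hd (show (0:ℝ) < -Real.cos (α * Real.pi / 2) by linarith [hcosα.2])]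
      · nlinarith [mul_pos hd (show (0:ℝ) < 1 + Real.cos (α * Real.pi / 2) by linarith [hcosα.1])]
    · intro h
      exact absurd (hmin.symm.trans h) hαβ
  · -- β < α, min = β
    have hmin : min α β = β := min_eq_right hgtc.le
    have hcosβ := cos_gamma_mem hβ1 hβ2
    set G : ℝ × ℝ → ℝ := fun θ => ((e * ρ) * (qsym β θ.1).re + d * (qsym α θ.2).re)
        / (θ.1 ^ 2 + θ.2 ^ 2) ^ (β / 2) with hGdef
    have hfun : (fun θ : ℝ × ℝ => Fsym α β d e ρ θ / (θ.1 ^ 2 + θ.2 ^ 2) ^ (min α β / 2))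
        = G ∘ Prod.swap := by
      funext θ
      rw [hmin, Fsym]
      simp only [hGdef, Function.comp_apply, Prod.fst_swap, Prod.snd_swap]
      rw [add_comm (θ.2 ^ 2) (θ.1 ^ 2)]
      congr 1
      ring
    have hls : limsup (fun θ : ℝ × ℝ =>
        Fsym α β d e ρ θ / (θ.1 ^ 2 + θ.2 ^ 2) ^ (min α β / 2)) (𝓝[≠] (0 : ℝ × ℝ))
        = (e * ρ) * (-2 * Real.cos (β * Real.pi / 2)) := by
      rw [hfun, limsup_comp_swap G, hGdef]
      exact limsup_helper hβ1 hβ2 hα1 hα2 hgtc (by positivity) hd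
    have heρ : 0 < e * ρ := mul_pos he hρ
    have hL : 0 < (e * ρ) * (-2 * Real.cos (β * Real.pi / 2)) :=
      mul_pos heρ (by linarith [hcosβ.2])
    refine ⟨(e * ρ) * (-2 * Real.cos (β * Real.pi / 2)) / 2,
      (e * ρ) * (-2 * Real.cos (β * Real.pi / 2)) + 1, by positivity, by positivity, ?_, ?_, ?_, ?_⟩
    · rw [hls]; linarith
    · rw [hls]; linarith
    · intro h
      exact absurd (h.symm.trans hmin) hαβ
    · intro _
      refine ⟨by rw [hls]; nlinarith, ?_, ?_⟩
      · nlinarith [mul_pos heρ (show (0:ℝ) < -Real.cos (β * Real.pi / 2) by linarith [hcosβ.2])]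
      · nlinarith [mul_pos heρ (show (0:ℝ) < 1 + Real.cos (β * Real.pi / 2) by linarith [hcosβ.1])]
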